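/- arXiv:2506.04128 — 2 statements merged into one kernel-verified Lean document; each statement's English description precedes it below -/
import Mathlib

section
/- Let (Θ, 𝒜, ρ) be a probability space and let q : Θ × ℝ^{n×d} × {0,1}^n × ℝ^n → [0,∞) be jointly measurable with ∫_{ℝ^n} q(θ,x,a,y) dy = 1 for every (θ,x,a). Define the statistic m(y,x,a) = ∫_Θ q(θ,x,a,y) dρ(θ), and let φ be the randomized permutation test at level α ∈ [0,1] built from m. Let ν be a probability measure on ℝ^{n×d} × {0,1}^n that is invariant under a ↦ a∘τ for every permutation τ of {1,…,n}, and define the Bayesian expected power of a measurable test φ' : ℝ^n × ℝ^{n×d} × {0,1}^n → [0,1] as BEP(φ') = ∫∫_{ℝ^n} φ'(y,x,a) m(y,x,a) dy dν(x,a). Then for every test φ' satisfying E_p[φ'(D)] ≤ α for every probability measure p on the data space that satisfies H0, one has BEP(φ') ≤ BEP(φ). In particular φ maximizes the Bayesian expected power among all α-level tests of H0. -/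
/-!
STATEMENT 2 (Proposition 1 of the paper): the randomized permutation test
built from the statistic `m(y,x,a) = ∫_Θ q(θ,x,a,y) dρ(θ)` maximizes the
Bayesian expected power `BEP(φ') = ∫∫ φ'(y,x,a)·m(y,x,a) dy dν(x,a)` among all
α-level tests of the permutation-invariance null hypothesis H0.
-/

open MeasureTheory

noncomputable section

/-- The data space: outcomes `y ∈ ℝⁿ`, covariates `x ∈ ℝ^{n×d}`,
treatment labels `a ∈ {0,1}ⁿ`. -/
abbrev TrialData (n d : ℕ) : Type :=
  (Fin n → ℝ) × (Fin n → Fin d → ℝ) × (Fin n → Bool)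

/-- `D^τ`: the data with permuted treatment labels. -/
def permData {n d : ℕ} (τ : Equiv.Perm (Fin n)) (D : TrialData n d) : TrialData n d :=
  (D.1, D.2.1, D.2.2 ∘ τ)

/-- The null hypothesis H0: `p` is invariant under every permutation of the
treatment-label coordinate. -/
def SatisfiesH0 {n d : ℕ} (p : Measure (TrialData n d)) : Prop :=
  ∀ τ : Equiv.Perm (Fin n), p.map (permData τ) = p

/-- `#{τ : m(D^τ) > t}`. -/
def countGT {n d : ℕ} (m : TrialData n d → ℝ) (D : TrialData n d) (t : ℝ) : ℕ :=
  Nat.card {τ : Equiv.Perm (Fin n) | m (permData τ D) > t}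

/-- `#{τ : m(D^τ) ≥ t}`. -/
def countGE {n d : ℕ} (m : TrialData n d → ℝ) (D : TrialData n d) (t : ℝ) : ℕ :=
  Nat.card {τ : Equiv.Perm (Fin n) | m (permData τ D) ≥ t}

/-- `#{τ : m(D^τ) = t}`. -/
def countEQ {n d : ℕ} (m : TrialData n d → ℝ) (D : TrialData n d) (t : ℝ) : ℕ :=
  Nat.card {τ : Equiv.Perm (Fin n) | m (permData τ D) = t}

/-- `t` is, at each data set `D`, a `(1−α)`-quantile of the multiset
`{m(D^τ) : τ a permutation}`. -/
def IsPermQuantile {n d : ℕ} (m : TrialData n d → ℝ) (α : ℝ)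
    (t : TrialData n d → ℝ) : Prop :=
  ∀ D : TrialData n d,
    (countGT m D (t D) : ℝ) ≤ α * (Nat.factorial n : ℝ) ∧
    α * (Nat.factorial n : ℝ) ≤ (countGE m D (t D) : ℝ)

/-- The randomized permutation test at level `α` built from the statistic `m`
and the quantile function `t`. -/
def permTest {n d : ℕ} (m : TrialData n d → ℝ) (α : ℝ)
    (t : TrialData n d → ℝ) (D : TrialData n d) : ℝ :=
  if m D > t D then 1
  else if m D < t D then 0
  else (α * (Nat.factorial n : ℝ) - (countGT m D (t D) : ℝ)) / (countEQ m D (t D) : ℝ)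

/-- The Bayesian expected power of a test `φ'` with respect to the density `m`
and the covariate/treatment law `ν`:
`BEP(φ') = ∫ ( ∫ φ'(y,x,a)·m(y,x,a) dy ) dν(x,a)`, the inner integral being
with respect to Lebesgue measure on `ℝⁿ`. -/
def BEP {n d : ℕ} (ν : Measure ((Fin n → Fin d → ℝ) × (Fin n → Bool)))
    (m : TrialData n d → ℝ) (φ' : TrialData n d → ℝ) : ℝ :=
  ∫ xa, (∫ y, φ' (y, xa.1, xa.2) * m (y, xa.1, xa.2)) ∂ν

section Aux
variable {n d : ℕ}

lemma permData_permData (σ τ : Equiv.Perm (Fin n)) (D : TrialData n d) :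
    permData τ (permData σ D) = permData (σ * τ) D := rfl

lemma permData_one (D : TrialData n d) : permData 1 D = D := rfl

lemma card_le_card_set {X : Type*} [Finite X] {s u : Set X} (h : s ⊆ u) :
    Nat.card s ≤ Nat.card u := by
  rw [Nat.card_coe_set_eq, Nat.card_coe_set_eq]
  exact Set.ncard_le_ncard h u.toFinite

lemma count_perm (m : TrialData n d → ℝ) (p : ℝ → Prop) (σ : Equiv.Perm (Fin n))
    (D : TrialData n d) :
    Nat.card {τ : Equiv.Perm (Fin n) | p (m (permData τ (permData σ D)))}
      = Nat.card {τ : Equiv.Perm (Fin n) | p (m (permData τ D))} :=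
  Nat.card_congr ((Equiv.mulLeft σ).subtypeEquiv fun τ => by
    simp [permData_permData, Equiv.mulLeft])

lemma countGT_perm (m : TrialData n d → ℝ) (σ : Equiv.Perm (Fin n)) (D : TrialData n d) (v : ℝ) :
    countGT m (permData σ D) v = countGT m D v := count_perm m (fun x => x > v) σ D

lemma countGE_perm (m : TrialData n d → ℝ) (σ : Equiv.Perm (Fin n)) (D : TrialData n d) (v : ℝ) :
    countGE m (permData σ D) v = countGE m D v := count_perm m (fun x => x ≥ v) σ D

lemma countEQ_perm (m : TrialData n d → ℝ) (σ : Equiv.Perm (Fin n)) (D : TrialData n d) (v : ℝ) :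
    countEQ m (permData σ D) v = countEQ m D v := count_perm m (fun x => x = v) σ D

lemma countGE_eq_add (m : TrialData n d → ℝ) (D : TrialData n d) (v : ℝ) :
    countGE m D v = countGT m D v + countEQ m D v := by
  rw [countGE, countGT, countEQ, Nat.card_coe_set_eq, Nat.card_coe_set_eq,
    Nat.card_coe_set_eq]
  rw [← Set.ncard_union_eq ?_ (Set.toFinite _) (Set.toFinite _)]
  · congr 1
    ext τ
    simp only [Set.mem_setOf_eq, Set.mem_union]
    constructor
    · intro h; rcases lt_or_eq_of_le h with h' | h'
      · exact Or.inl h'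
      · exact Or.inr h'.symm
    · rintro (h | h)
      · exact le_of_lt h
      · exact le_of_eq h.symm
  · rw [Set.disjoint_left]
    intro τ h1 h2
    simp only [Set.mem_setOf_eq] at h1 h2
    exact absurd h2 (ne_of_gt h1)

lemma countEQ_self_pos (m : TrialData n d → ℝ) (D : TrialData n d) :
    0 < countEQ m D (m D) := by
  have : Nonempty {τ : Equiv.Perm (Fin n) | m (permData τ D) = m D} :=
    ⟨⟨1, by simp [permData_one]⟩⟩
  exact Nat.card_pos

end Aux
section Core
variable {n d : ℕ} {m : TrialData n d → ℝ} {α : ℝ} {t : TrialData n d → ℝ}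

/-- abbreviation for the real level αn! -/
local notation "AN" => α * (Nat.factorial n : ℝ)

lemma permTest_eq_one (hqt : IsPermQuantile m α t) (σ : Equiv.Perm (Fin n)) (D : TrialData n d)
    (h : t D < m (permData σ D)) : permTest m α t (permData σ D) = 1 := by
  set E := permData σ D with hE
  set v := m E with hv
  -- countGE at level v is at most αn!
  have hGEv : (countGE m D v : ℝ) ≤ AN := by
    refine le_trans ?_ (hqt D).1
    have : countGE m D v ≤ countGT m D (t D) :=
      card_le_card_set (fun τ hτ => lt_of_lt_of_le h hτ)
    exact_mod_cast this
  have hEQpos : 0 < countEQ m D v := by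
    rw [← countEQ_perm m σ D v]; rw [hE] at *
    exact countEQ_self_pos m (permData σ D)
  rw [permTest]
  rcases lt_trichotomy (m E) (t E) with hlt | heq | hgt
  · -- impossible: countGT at v would be ≥ αn!, contradicting countGE ≤ αn!
    exfalso
    have h1 : AN ≤ (countGE m E (t E) : ℝ) := (hqt E).2
    rw [countGE_perm] at h1
    have h2 : countGE m D (t E) ≤ countGT m D v :=
      card_le_card_set (fun τ hτ => lt_of_lt_of_le hlt hτ)
    have h3 := countGE_eq_add m D v
    have h4 : (countGT m D v : ℝ) + (countEQ m D v : ℝ) ≤ AN := by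
      rw [← Nat.cast_add, ← h3]; exact hGEv
    have h5 : (1 : ℝ) ≤ (countEQ m D v : ℝ) := by exact_mod_cast hEQpos
    have h2' : (countGE m D (t E) : ℝ) ≤ (countGT m D v : ℝ) := by exact_mod_cast h2
    linarith
  · -- tie case: the randomized value equals 1
    rw [if_neg (by rw [heq]; exact lt_irrefl _), if_neg (by rw [heq]; exact lt_irrefl _)]
    have h1 : AN ≤ (countGE m E (t E) : ℝ) := (hqt E).2
    rw [countGE_perm, ← heq, ← hv] at h1
    have h3 := countGE_eq_add m D v
    have heq' : (countGE m D v : ℝ) = AN := le_antisymm hGEv h1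
    have hnum : AN - (countGT m E (t E) : ℝ) = (countEQ m E (t E) : ℝ) := by
      rw [countGT_perm, countEQ_perm, ← heq, ← hv, ← heq', h3]
      push_cast; ring
    rw [hnum]
    have : (countEQ m E (t E) : ℝ) ≠ 0 := by
      rw [countEQ_perm, ← heq, ← hv]
      exact_mod_cast hEQpos.ne'
    exact div_self this
  · rw [if_pos hgt]

lemma permTest_eq_zero (hqt : IsPermQuantile m α t) (σ : Equiv.Perm (Fin n)) (D : TrialData n d)
    (h : m (permData σ D) < t D) : permTest m α t (permData σ D) = 0 := by
  set E := permData σ D with hE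
  set v := m E with hv
  have hEQpos : 0 < countEQ m D v := by
    rw [← countEQ_perm m σ D v]; rw [hE] at *
    exact countEQ_self_pos m (permData σ D)
  -- countGT at v is at least αn!
  have hGTv : AN ≤ (countGT m D v : ℝ) := by
    refine le_trans (hqt D).2 ?_
    have : countGE m D (t D) ≤ countGT m D v :=
      card_le_card_set (fun τ hτ => lt_of_lt_of_le h hτ)
    exact_mod_cast this
  rw [permTest]
  rcases lt_trichotomy (m E) (t E) with hlt | heq | hgt
  · rw [if_neg (not_lt.mpr (le_of_lt hlt)), if_pos hlt]
  · rw [if_neg (by rw [heq]; exact lt_irrefl _), if_neg (by rw [heq]; exact lt_irrefl _)]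
    have h1 : (countGT m E (t E) : ℝ) ≤ AN := (hqt E).1
    rw [countGT_perm, ← heq, ← hv] at h1
    have : AN - (countGT m E (t E) : ℝ) = 0 := by
      rw [countGT_perm, ← heq, ← hv]; linarith
    rw [this, zero_div]
  · -- impossible
    exfalso
    have h1 : (countGT m E (t E) : ℝ) ≤ AN := (hqt E).1
    rw [countGT_perm] at h1
    have h2 : countGE m D v ≤ countGT m D (t E) :=
      card_le_card_set (fun τ hτ => lt_of_lt_of_le hgt hτ)
    have h3 := countGE_eq_add m D v
    have h5 : (1 : ℝ) ≤ (countEQ m D v : ℝ) := by exact_mod_cast hEQpos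
    have h2' : (countGE m D v : ℝ) ≤ (countGT m D (t E) : ℝ) := by exact_mod_cast h2
    have h3' : (countGE m D v : ℝ) = (countGT m D v : ℝ) + (countEQ m D v : ℝ) := by
      exact_mod_cast h3
    linarith

lemma permTest_mem_Icc (hqt : IsPermQuantile m α t) (E : TrialData n d) :
    permTest m α t E ∈ Set.Icc (0 : ℝ) 1 := by
  rw [permTest]
  split_ifs with h1 h2
  · exact ⟨zero_le_one, le_refl 1⟩
  · exact ⟨le_refl 0, zero_le_one⟩
  · have hv : m E = t E := le_antisymm (not_lt.mp h1) (not_lt.mp h2)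
    have hnum : (0:ℝ) ≤ AN - (countGT m E (t E) : ℝ) := by linarith [(hqt E).1]
    constructor
    · exact div_nonneg hnum (Nat.cast_nonneg _)
    · rcases Nat.eq_zero_or_pos (countEQ m E (t E)) with hz | hp
      · rw [hz]; simp
      · rw [div_le_one (by exact_mod_cast hp)]
        have h3 : (countGE m E (t E) : ℝ)
            = (countGT m E (t E) : ℝ) + (countEQ m E (t E) : ℝ) := by
          exact_mod_cast countGE_eq_add m E (t E)
        linarith [(hqt E).2]

end Core
section Core2

variable {n d : ℕ} {m : TrialData n d → ℝ} {α : ℝ} {t : TrialData n d → ℝ}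

local notation "AN" => α * (Nat.factorial n : ℝ)

lemma permTest_ge_gamma (hqt : IsPermQuantile m α t) (σ : Equiv.Perm (Fin n))
    (D : TrialData n d) (h : m (permData σ D) = t D) :
    (AN - (countGT m D (t D) : ℝ)) / (countEQ m D (t D) : ℝ)
      ≤ permTest m α t (permData σ D) := by
  set E := permData σ D with hE
  have hEQpos : 0 < countEQ m D (t D) := by
    rw [← h, ← countEQ_perm m σ D]; rw [hE] at *
    exact countEQ_self_pos m (permData σ D)
  have hEQpos' : (0:ℝ) < (countEQ m D (t D) : ℝ) := by exact_mod_cast hEQpos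
  have h3 : (countGE m D (t D) : ℝ) = (countGT m D (t D) : ℝ) + (countEQ m D (t D) : ℝ) := by
    exact_mod_cast countGE_eq_add m D (t D)
  rw [permTest]
  rcases lt_trichotomy (m E) (t E) with hlt | heq | hgt
  · -- φ(E) = 0 ; show γ ≤ 0
    rw [if_neg (not_lt.mpr (le_of_lt hlt)), if_pos hlt]
    have h1 : AN ≤ (countGE m E (t E) : ℝ) := (hqt E).2
    rw [countGE_perm] at h1
    have h2 : countGE m D (t E) ≤ countGT m D (m E) :=
      card_le_card_set (fun τ hτ => lt_of_lt_of_le hlt hτ)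
    have h2' : (countGE m D (t E) : ℝ) ≤ (countGT m D (m E) : ℝ) := by exact_mod_cast h2
    rw [h] at h2'
    exact div_nonpos_of_nonpos_of_nonneg (by linarith) (Nat.cast_nonneg _)
  · -- tie with own threshold: equal to γ
    rw [if_neg (by rw [heq]; exact lt_irrefl _), if_neg (by rw [heq]; exact lt_irrefl _)]
    rw [countGT_perm, countEQ_perm, ← heq, h]
  · -- φ(E) = 1 ; show γ ≤ 1
    rw [if_pos hgt]
    rw [div_le_one hEQpos']
    linarith [(hqt D).2]

lemma sum_permTest_ge (hqt : IsPermQuantile m α t) (D : TrialData n d) :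
    AN ≤ ∑ τ : Equiv.Perm (Fin n), permTest m α t (permData τ D) := by
  classical
  set c := t D with hc
  set γ : ℝ := (AN - (countGT m D c : ℝ)) / (countEQ m D c : ℝ) with hγ
  have step1 : ∑ τ : Equiv.Perm (Fin n),
      ((if m (permData τ D) > c then (1:ℝ) else 0) +
       (if m (permData τ D) = c then γ else 0))
      ≤ ∑ τ : Equiv.Perm (Fin n), permTest m α t (permData τ D) := by
    refine Finset.sum_le_sum fun τ _ => ?_
    rcases lt_trichotomy (m (permData τ D)) c with hlt | heq | hgt
    · rw [if_neg (not_lt.mpr (le_of_lt hlt)), if_neg (ne_of_lt hlt)]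
      rw [permTest_eq_zero hqt τ D hlt]; norm_num
    · rw [if_neg (by rw [heq]; exact lt_irrefl _), if_pos heq]
      have := permTest_ge_gamma hqt τ D heq
      rw [← hγ] at this; linarith
    · rw [if_pos hgt, if_neg (ne_of_gt hgt)]
      rw [permTest_eq_one hqt τ D hgt]; norm_num
  refine le_trans ?_ step1
  rw [Finset.sum_add_distrib]
  have e1 : ∑ τ : Equiv.Perm (Fin n), (if m (permData τ D) > c then (1:ℝ) else 0)
      = (countGT m D c : ℝ) := by
    rw [Finset.sum_ite, Finset.sum_const_zero, add_zero, Finset.sum_const,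
      countGT, Nat.card_eq_fintype_card, Fintype.card_subtype]
    simp
  have e2 : ∑ τ : Equiv.Perm (Fin n), (if m (permData τ D) = c then γ else 0)
      = (countEQ m D c : ℝ) * γ := by
    rw [Finset.sum_ite, Finset.sum_const_zero, add_zero, Finset.sum_const,
      countEQ, Nat.card_eq_fintype_card, Fintype.card_subtype]
    simp [mul_comm]
  rw [e1, e2]
  have h3 : (countGE m D c : ℝ) = (countGT m D c : ℝ) + (countEQ m D c : ℝ) := by
    exact_mod_cast countGE_eq_add m D c
  rcases Nat.eq_zero_or_pos (countEQ m D c) with hz | hp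
  · have : (countEQ m D c : ℝ) = 0 := by exact_mod_cast hz
    rw [this]
    have := (hqt D).2; rw [← hc] at *
    linarith [(hqt D).2]
  · have hp' : (0:ℝ) < (countEQ m D c : ℝ) := by exact_mod_cast hp
    rw [hγ, mul_div_cancel₀ _ (ne_of_gt hp')]
    linarith

/-- The pointwise (orbit-wise) Neyman–Pearson comparison. -/
lemma core_sum_nonneg (hqt : IsPermQuantile m α t) (hm0 : ∀ D : TrialData n d, 0 ≤ m D)
    (φ' : TrialData n d → ℝ) (hφ'01 : ∀ D, φ' D ∈ Set.Icc (0:ℝ) 1)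
    (D : TrialData n d)
    (hsum : ∑ τ : Equiv.Perm (Fin n), φ' (permData τ D) ≤ AN) :
    0 ≤ ∑ τ : Equiv.Perm (Fin n),
      (permTest m α t (permData τ D) - φ' (permData τ D)) * m (permData τ D) := by
  rcases lt_or_ge (t D) 0 with hneg | hpos
  · refine Finset.sum_nonneg fun τ _ => ?_
    have h1 : permTest m α t (permData τ D) = 1 :=
      permTest_eq_one hqt τ D (lt_of_lt_of_le hneg (hm0 _))
    rw [h1]
    exact mul_nonneg (by linarith [(hφ'01 (permData τ D)).2]) (hm0 _)
  · -- compare with t D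
    have step : ∑ τ : Equiv.Perm (Fin n),
        (permTest m α t (permData τ D) - φ' (permData τ D)) * t D
        ≤ ∑ τ : Equiv.Perm (Fin n),
        (permTest m α t (permData τ D) - φ' (permData τ D)) * m (permData τ D) := by
      refine Finset.sum_le_sum fun τ _ => ?_
      rcases lt_trichotomy (m (permData τ D)) (t D) with hlt | heq | hgt
      · rw [permTest_eq_zero hqt τ D hlt]
        have := (hφ'01 (permData τ D)).1
        nlinarith
      · rw [heq]
      · rw [permTest_eq_one hqt τ D hgt]
        have := (hφ'01 (permData τ D)).2
        nlinarith
    refine le_trans ?_ step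
    rw [← Finset.sum_mul]
    have h1 : AN ≤ ∑ τ : Equiv.Perm (Fin n), permTest m α t (permData τ D) :=
      sum_permTest_ge hqt D
    have : (0:ℝ) ≤ (∑ τ : Equiv.Perm (Fin n),
        (permTest m α t (permData τ D) - φ' (permData τ D))) := by
      rw [Finset.sum_sub_distrib]
      linarith
    exact mul_nonneg this hpos

end Core2
section MeasureAux
variable {n d : ℕ}

lemma measurable_permData (σ : Equiv.Perm (Fin n)) :
    Measurable (permData σ : TrialData n d → TrialData n d) := by
  refine measurable_fst.prodMk (Measurable.prodMk ?_ ?_)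
  · exact measurable_fst.comp measurable_snd
  · exact measurable_pi_lambda _ fun i =>
      (measurable_pi_apply (σ i)).comp (measurable_snd.comp measurable_snd)

/-- The uniform measure on the orbit of `D`. -/
def orbitMeasure (D : TrialData n d) : Measure (TrialData n d) :=
  ((Nat.factorial n : ENNReal))⁻¹ •
    ∑ τ : Equiv.Perm (Fin n), Measure.dirac (permData τ D)

lemma orbitMeasure_prob (D : TrialData n d) : IsProbabilityMeasure (orbitMeasure D) := by
  constructor
  rw [orbitMeasure, Measure.smul_apply, Measure.finset_sum_apply]
  simp only [Measure.dirac_apply_of_mem (Set.mem_univ _), Finset.sum_const, Finset.card_univ,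
    Fintype.card_perm, Fintype.card_fin, smul_eq_mul, nsmul_eq_mul, mul_one]
  rw [ENNReal.inv_mul_cancel]
  · exact_mod_cast Nat.cast_ne_zero.mpr (Nat.factorial_ne_zero n)
  · exact ENNReal.natCast_ne_top _

lemma orbitMeasure_H0 (D : TrialData n d) : SatisfiesH0 (orbitMeasure D) := by
  intro σ
  rw [orbitMeasure, Measure.map_smul]
  congr 1
  rw [← Measure.mapₗ_apply_of_measurable (measurable_permData σ), map_sum]
  have e1 : ∀ τ : Equiv.Perm (Fin n),
      Measure.mapₗ (permData σ) (Measure.dirac (permData τ D))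
        = Measure.dirac (permData (τ * σ) D) := fun τ => by
    rw [Measure.mapₗ_apply_of_measurable (measurable_permData σ),
      Measure.map_dirac' (measurable_permData σ), permData_permData]
  simp_rw [e1]
  exact Fintype.sum_equiv (Equiv.mulRight σ) _ _ (fun τ => rfl)

lemma integral_orbitMeasure (D : TrialData n d) (f : TrialData n d → ℝ) (hf : Measurable f) :
    ∫ E, f E ∂(orbitMeasure D)
      = ((Nat.factorial n : ℝ))⁻¹ * ∑ τ : Equiv.Perm (Fin n), f (permData τ D) := by
  rw [orbitMeasure, integral_smul_measure, integral_finset_sum_measure]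
  · simp_rw [integral_dirac]
    rw [ENNReal.toReal_inv, ENNReal.toReal_natCast, smul_eq_mul]
  · intro τ _
    refine ⟨hf.aestronglyMeasurable, ?_⟩
    rw [HasFiniteIntegral, lintegral_dirac' _ hf.enorm]
    exact ENNReal.coe_lt_top

/-- The level constraint for H0 tests yields a pointwise orbit-sum bound. -/
lemma sum_phi'_le (α : ℝ) (φ' : TrialData n d → ℝ) (hφ'_meas : Measurable φ')
    (hφ'_level : ∀ p : Measure (TrialData n d), IsProbabilityMeasure p →
      SatisfiesH0 p → ∫ D, φ' D ∂p ≤ α) (D : TrialData n d) :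
    ∑ τ : Equiv.Perm (Fin n), φ' (permData τ D) ≤ α * (Nat.factorial n : ℝ) := by
  have h := hφ'_level (orbitMeasure D) (orbitMeasure_prob D) (orbitMeasure_H0 D)
  rw [integral_orbitMeasure D φ' hφ'_meas] at h
  have hN : (0:ℝ) < (Nat.factorial n : ℝ) := by exact_mod_cast (Nat.factorial_pos n)
  rw [inv_mul_le_iff₀ hN] at h
  linarith [h]
end MeasureAux
section Meas
variable {n d : ℕ}

lemma countGT_cast (m : TrialData n d → ℝ) (D : TrialData n d) (v : ℝ) :
    ((countGT m D v : ℝ)) = ∑ τ : Equiv.Perm (Fin n),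
      if v < m (permData τ D) then (1:ℝ) else 0 := by
  classical
  rw [countGT, Nat.card_eq_fintype_card, Fintype.card_subtype, Finset.sum_boole]
  norm_num

lemma countEQ_cast (m : TrialData n d → ℝ) (D : TrialData n d) (v : ℝ) :
    ((countEQ m D v : ℝ)) = ∑ τ : Equiv.Perm (Fin n),
      if m (permData τ D) = v then (1:ℝ) else 0 := by
  classical
  rw [countEQ, Nat.card_eq_fintype_card, Fintype.card_subtype, Finset.sum_boole]
  norm_num

lemma measurable_permTest (m : TrialData n d → ℝ) (hm : Measurable m) (α : ℝ)
    (t : TrialData n d → ℝ) (ht : Measurable t) :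
    Measurable (permTest m α t) := by
  classical
  have hGT : Measurable (fun D : TrialData n d => (countGT m D (t D) : ℝ)) := by
    simp_rw [countGT_cast]
    refine Finset.measurable_sum _ fun τ _ => Measurable.ite ?_ measurable_const measurable_const
    exact measurableSet_lt ht (hm.comp (measurable_permData τ))
  have hEQ : Measurable (fun D : TrialData n d => (countEQ m D (t D) : ℝ)) := by
    simp_rw [countEQ_cast]
    refine Finset.measurable_sum _ fun τ _ => Measurable.ite ?_ measurable_const measurable_const
    exact measurableSet_eq_fun (hm.comp (measurable_permData τ)) ht
  unfold permTest
  refine Measurable.ite (measurableSet_lt ht hm) measurable_const ?_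
  refine Measurable.ite (measurableSet_lt hm ht) measurable_const ?_
  exact ((measurable_const.sub hGT).div hEQ)

end Meas
theorem stmt_2 {n d : ℕ} (hn : 1 ≤ n) (hd : 1 ≤ d)
    {Θ : Type} [MeasurableSpace Θ] (ρ : Measure Θ) [IsProbabilityMeasure ρ]
    (q : Θ → (Fin n → Fin d → ℝ) → (Fin n → Bool) → (Fin n → ℝ) → ℝ)
    (hq_meas : Measurable (fun z : Θ × (Fin n → Fin d → ℝ) × (Fin n → Bool) × (Fin n → ℝ) =>
      q z.1 z.2.1 z.2.2.1 z.2.2.2))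
    (hq_nonneg : ∀ θ x a y, 0 ≤ q θ x a y)
    (hq_norm : ∀ θ x a, ∫ y, q θ x a y = 1)
    (m : TrialData n d → ℝ)
    (hm : ∀ D : TrialData n d, m D = ∫ θ, q θ D.2.1 D.2.2 D.1 ∂ρ)
    (α : ℝ) (hα : α ∈ Set.Icc (0 : ℝ) 1)
    (t : TrialData n d → ℝ) (ht : Measurable t) (hqt : IsPermQuantile m α t)
    (ν : Measure ((Fin n → Fin d → ℝ) × (Fin n → Bool))) [IsProbabilityMeasure ν]
    (hν : ∀ τ : Equiv.Perm (Fin n),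
      ν.map (fun xa : (Fin n → Fin d → ℝ) × (Fin n → Bool) => (xa.1, xa.2 ∘ τ)) = ν)
    (φ' : TrialData n d → ℝ) (hφ'_meas : Measurable φ')
    (hφ'_range : ∀ D, φ' D ∈ Set.Icc (0 : ℝ) 1)
    (hφ'_level : ∀ p : Measure (TrialData n d), IsProbabilityMeasure p →
      SatisfiesH0 p → ∫ D, φ' D ∂p ≤ α) :
    BEP ν m φ' ≤ BEP ν m (permTest m α t) := by
  classical
  -- measurability of m
  have h1 : Measurable (fun p : TrialData n d × Θ =>
      (p.2, p.1.2.1, p.1.2.2, p.1.1) :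
      TrialData n d × Θ → Θ × (Fin n → Fin d → ℝ) × (Fin n → Bool) × (Fin n → ℝ)) :=
    measurable_snd.prodMk ((measurable_fst.snd.fst).prodMk
      ((measurable_fst.snd.snd).prodMk measurable_fst.fst))
  have hm_meas : Measurable m := by
    have hmfun : m = fun D : TrialData n d => ∫ θ, q θ D.2.1 D.2.2 D.1 ∂ρ := funext hm
    rw [hmfun]
    exact (StronglyMeasurable.integral_prod_right'
      ((hq_meas.comp h1).stronglyMeasurable)).measurable
  have hm0 : ∀ D : TrialData n d, 0 ≤ m D := fun D => by
    rw [hm D]; exact integral_nonneg fun θ => hq_nonneg _ _ _ _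
  -- integrability of q in y, with lintegral 1
  have hq_int : ∀ θ x a, Integrable (fun y => q θ x a y) := by
    intro θ x a
    by_contra hni
    have := hq_norm θ x a
    rw [integral_undef hni] at this
    norm_num at this
  have hq_lint : ∀ θ x a, ∫⁻ y, ENNReal.ofReal (q θ x a y) = 1 := by
    intro θ x a
    rw [← ofReal_integral_eq_lintegral_ofReal (hq_int θ x a)
      (Filter.Eventually.of_forall fun y => hq_nonneg θ x a y), hq_norm θ x a]
    simp
  -- the statistic m integrates to at most 1 in y
  have hm_lint : ∀ x a, ∫⁻ y, ENNReal.ofReal (m (y, x, a)) ≤ 1 := by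
    intro x a
    have step1 : ∀ y : Fin n → ℝ, ENNReal.ofReal (m (y, x, a))
        ≤ ∫⁻ θ, ENNReal.ofReal (q θ x a y) ∂ρ := by
      intro y
      by_cases hI : Integrable (fun θ => q θ x a y) ρ
      · rw [hm (y, x, a)]
        rw [ofReal_integral_eq_lintegral_ofReal hI
          (Filter.Eventually.of_forall fun θ => hq_nonneg θ x a y)]
      · rw [hm (y, x, a)]
        simp only [integral_undef hI, ENNReal.ofReal_zero]
        exact zero_le
    have hswap : ∫⁻ y, (∫⁻ θ, ENNReal.ofReal (q θ x a y) ∂ρ)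
        = ∫⁻ θ, (∫⁻ y, ENNReal.ofReal (q θ x a y)) ∂ρ := by
      refine lintegral_lintegral_swap ?_
      refine (ENNReal.measurable_ofReal.comp ?_).aemeasurable
      exact hq_meas.comp (measurable_snd.prodMk (measurable_const.prodMk
        (measurable_const.prodMk measurable_fst)))
    calc ∫⁻ y, ENNReal.ofReal (m (y, x, a))
        ≤ ∫⁻ y, (∫⁻ θ, ENNReal.ofReal (q θ x a y) ∂ρ) := lintegral_mono step1
      _ = ∫⁻ θ, (∫⁻ y, ENNReal.ofReal (q θ x a y)) ∂ρ := hswap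
      _ = ∫⁻ θ, 1 ∂ρ := by simp_rw [hq_lint]
      _ = 1 := by simp
  -- m (·, x, a) is integrable with integral at most 1
  have hyxa : ∀ (x : Fin n → Fin d → ℝ) (a : Fin n → Bool),
      Measurable (fun y : Fin n → ℝ => ((y, x, a) : TrialData n d)) := fun x a =>
    measurable_id.prodMk measurable_const
  have hm_int : ∀ x a, Integrable (fun y => m (y, x, a)) := by
    intro x a
    refine ⟨(hm_meas.comp (hyxa x a)).aestronglyMeasurable, ?_⟩
    rw [hasFiniteIntegral_iff_ofReal (Filter.Eventually.of_forall fun y => hm0 _)]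
    exact lt_of_le_of_lt (hm_lint x a) ENNReal.one_lt_top
  have hm_intval : ∀ x a, ∫ y, m (y, x, a) ≤ 1 := by
    intro x a
    rw [integral_eq_lintegral_of_nonneg_ae (Filter.Eventually.of_forall fun y => hm0 _)
      (hm_meas.comp (hyxa x a)).aestronglyMeasurable]
    calc (∫⁻ y, ENNReal.ofReal (m (y, x, a))).toReal
        ≤ (1 : ENNReal).toReal := ENNReal.toReal_mono ENNReal.one_ne_top (hm_lint x a)
      _ = 1 := by simp
  -- tests bounded in [0,1], times m: integrable with integral in [-1, 1]
  have key_int : ∀ (g : TrialData n d → ℝ), Measurable g → (∀ D, |g D| ≤ 1) →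
      ∀ x a, Integrable (fun y => g (y, x, a) * m (y, x, a)) := by
    intro g hg hg1 x a
    refine Integrable.mono' (hm_int x a)
      ((hg.comp (hyxa x a)).mul (hm_meas.comp (hyxa x a))).aestronglyMeasurable
      (Filter.Eventually.of_forall fun y => ?_)
    rw [Real.norm_eq_abs, abs_mul]
    calc |g (y, x, a)| * |m (y, x, a)| ≤ 1 * |m (y, x, a)| :=
        mul_le_mul_of_nonneg_right (hg1 _) (abs_nonneg _)
      _ = m (y, x, a) := by rw [one_mul, abs_of_nonneg (hm0 _)]
  have key_bdd : ∀ (g : TrialData n d → ℝ), Measurable g → (∀ D, |g D| ≤ 1) →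
      ∀ x a, |∫ y, g (y, x, a) * m (y, x, a)| ≤ 1 := by
    intro g hg hg1 x a
    have h1' := norm_integral_le_integral_norm (μ := volume)
      (fun y => g (y, x, a) * m (y, x, a))
    simp only [Real.norm_eq_abs] at h1'
    refine le_trans h1' (le_trans ?_ (hm_intval x a))
    refine integral_mono ((key_int g hg hg1 x a).abs) (hm_int x a) fun y => ?_
    rw [abs_mul]
    calc |g (y, x, a)| * |m (y, x, a)| ≤ 1 * |m (y, x, a)| :=
        mul_le_mul_of_nonneg_right (hg1 _) (abs_nonneg _)
      _ = m (y, x, a) := by rw [one_mul, abs_of_nonneg (hm0 _)]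
  -- the permutation test
  have hφ_meas : Measurable (permTest m α t) := measurable_permTest m hm_meas α t ht
  have hφ01 : ∀ D, permTest m α t D ∈ Set.Icc (0:ℝ) 1 := permTest_mem_Icc hqt
  -- the comparison integrand F and its partial integral G
  set F : TrialData n d → ℝ := fun D => (permTest m α t D - φ' D) * m D with hFdef
  have hdiff_abs : ∀ D, |permTest m α t D - φ' D| ≤ 1 := fun D => by
    rw [abs_le]
    constructor
    · linarith [(hφ01 D).1, (hφ'_range D).2]
    · linarith [(hφ01 D).2, (hφ'_range D).1]
  have hF_meas : Measurable F := (hφ_meas.sub hφ'_meas).mul hm_meas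
  have hF_int : ∀ x a, Integrable (fun y => F (y, x, a)) :=
    fun x a => key_int (fun D => permTest m α t D - φ' D) (hφ_meas.sub hφ'_meas) hdiff_abs x a
  set G : ((Fin n → Fin d → ℝ) × (Fin n → Bool)) → ℝ :=
    fun xa => ∫ y, F (y, xa.1, xa.2) with hGdef
  have hr : Measurable (fun p : ((Fin n → Fin d → ℝ) × (Fin n → Bool)) × (Fin n → ℝ) =>
      ((p.2, p.1.1, p.1.2) : TrialData n d)) :=
    measurable_snd.prodMk (measurable_fst.fst.prodMk measurable_fst.snd)
  have hG_meas : Measurable G := by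
    have hsm : StronglyMeasurable
        (fun p : ((Fin n → Fin d → ℝ) × (Fin n → Bool)) × (Fin n → ℝ) =>
          F (p.2, p.1.1, p.1.2)) := (hF_meas.comp hr).stronglyMeasurable
    exact hsm.integral_prod_right'.measurable
  have hG_bdd : ∀ xa, |G xa| ≤ 1 := fun xa =>
    key_bdd (fun D => permTest m α t D - φ' D) (hφ_meas.sub hφ'_meas) hdiff_abs xa.1 xa.2
  -- the inner integrals of the two tests are integrable over ν
  have hint_test : ∀ (g : TrialData n d → ℝ), Measurable g → (∀ D, |g D| ≤ 1) →
      Integrable (fun xa : (Fin n → Fin d → ℝ) × (Fin n → Bool) =>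
        ∫ y, g (y, xa.1, xa.2) * m (y, xa.1, xa.2)) ν := by
    intro g hg hg1
    have hsm : StronglyMeasurable
        (fun p : ((Fin n → Fin d → ℝ) × (Fin n → Bool)) × (Fin n → ℝ) =>
          g (p.2, p.1.1, p.1.2) * m (p.2, p.1.1, p.1.2)) :=
      ((hg.comp hr).mul (hm_meas.comp hr)).stronglyMeasurable
    refine Integrable.mono' (integrable_const 1)
      hsm.integral_prod_right'.measurable.aestronglyMeasurable
      (Filter.Eventually.of_forall fun xa => ?_)
    simpa [Real.norm_eq_abs] using key_bdd g hg hg1 xa.1 xa.2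
  have habs01 : ∀ (g : TrialData n d → ℝ), (∀ D, g D ∈ Set.Icc (0:ℝ) 1) →
      (∀ D, |g D| ≤ 1) := fun g hg D => by
    rw [abs_le]; exact ⟨by linarith [(hg D).1], (hg D).2⟩
  have habs01 : ∀ (g : TrialData n d → ℝ), (∀ D, g D ∈ Set.Icc (0:ℝ) 1) →
      (∀ D, |g D| ≤ 1) := fun g hg D => by
    rw [abs_le]; exact ⟨by linarith [(hg D).1], (hg D).2⟩
  -- BEP difference equals ∫ G dν
  have hpt : ∀ xa : (Fin n → Fin d → ℝ) × (Fin n → Bool),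
      G xa = (∫ y, permTest m α t (y, xa.1, xa.2) * m (y, xa.1, xa.2))
           - ∫ y, φ' (y, xa.1, xa.2) * m (y, xa.1, xa.2) := by
    intro xa
    rw [← integral_sub (key_int _ hφ_meas (habs01 _ hφ01) xa.1 xa.2)
      (key_int _ hφ'_meas (habs01 _ hφ'_range) xa.1 xa.2)]
    refine integral_congr_ae (Filter.Eventually.of_forall fun y => ?_)
    simp only [hFdef]
    ring
  have hdiff : ∫ xa, G xa ∂ν = BEP ν m (permTest m α t) - BEP ν m φ' := by
    have e1 : ∫ xa, G xa ∂ν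
        = ∫ xa, ((∫ y, permTest m α t (y, xa.1, xa.2) * m (y, xa.1, xa.2))
          - ∫ y, φ' (y, xa.1, xa.2) * m (y, xa.1, xa.2)) ∂ν :=
      integral_congr_ae (Filter.Eventually.of_forall hpt)
    rw [e1, integral_sub (hint_test _ hφ_meas (habs01 _ hφ01))
      (hint_test _ hφ'_meas (habs01 _ hφ'_range))]
    rfl
  -- invariance of ν: each permuted integral of G agrees
  have hT_meas : ∀ τ : Equiv.Perm (Fin n),
      Measurable (fun xa : (Fin n → Fin d → ℝ) × (Fin n → Bool) => (xa.1, xa.2 ∘ τ)) :=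
    fun τ => measurable_fst.prodMk (measurable_pi_lambda _ fun i =>
      (measurable_pi_apply (τ i)).comp measurable_snd)
  have hinv : ∀ τ : Equiv.Perm (Fin n),
      ∫ xa, G (xa.1, xa.2 ∘ τ) ∂ν = ∫ xa, G xa ∂ν := by
    intro τ
    conv_rhs => rw [← hν τ]
    rw [integral_map (hT_meas τ).aemeasurable]
    rw [hν τ]
    exact hG_meas.aestronglyMeasurable
  have hGT_int : ∀ τ : Equiv.Perm (Fin n),
      Integrable (fun xa => G (xa.1, xa.2 ∘ τ)) ν := fun τ => by
    refine Integrable.mono' (integrable_const 1)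
      (hG_meas.comp (hT_meas τ)).aestronglyMeasurable
      (Filter.Eventually.of_forall fun xa => ?_)
    simpa [Real.norm_eq_abs] using hG_bdd (xa.1, xa.2 ∘ τ)
  -- pointwise positivity of the orbit sum
  have hsumG : 0 ≤ ∫ xa, (∑ τ : Equiv.Perm (Fin n), G (xa.1, xa.2 ∘ τ)) ∂ν := by
    refine integral_nonneg fun xa => ?_
    have e : ∀ τ : Equiv.Perm (Fin n), G (xa.1, xa.2 ∘ τ)
        = ∫ y, F (permData τ (y, xa.1, xa.2)) := fun τ => rfl
    simp_rw [e]
    rw [← integral_finset_sum]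
    · refine integral_nonneg fun y => ?_
      exact core_sum_nonneg hqt hm0 φ' hφ'_range (y, xa.1, xa.2)
        (sum_phi'_le α φ' hφ'_meas hφ'_level (y, xa.1, xa.2))
    · intro τ _
      exact hF_int xa.1 (xa.2 ∘ τ)
  -- conclude
  have h2 : ∑ τ : Equiv.Perm (Fin n), ∫ xa, G (xa.1, xa.2 ∘ τ) ∂ν
      = ∫ xa, (∑ τ : Equiv.Perm (Fin n), G (xa.1, xa.2 ∘ τ)) ∂ν :=
    (integral_finset_sum _ fun τ _ => hGT_int τ).symm
  have h3 : ∑ τ : Equiv.Perm (Fin n), ∫ xa, G (xa.1, xa.2 ∘ τ) ∂ν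
      = (n.factorial : ℝ) * ∫ xa, G xa ∂ν := by
    simp_rw [hinv]
    rw [Finset.sum_const, Finset.card_univ, Fintype.card_perm, Fintype.card_fin, nsmul_eq_mul]
  have hN : (0:ℝ) < (n.factorial : ℝ) := by exact_mod_cast Nat.factorial_pos n
  have hGpos : 0 ≤ ∫ xa, G xa ∂ν := by
    have h4 : 0 ≤ (n.factorial : ℝ) * ∫ xa, G xa ∂ν := by rw [← h3, h2]; exact hsumG
    nlinarith
  linarith [hdiff, hGpos]

end
end

section
/- Fix w₀ ∈ (0,1), a > 0, b ∈ ℝ, r > 0, and α ∈ (0,1). For r_E > 0, define g(r, r_E, a, b, w₀) = P( Φ(max(U₁,U₀)) − Φ(min(U₁,U₀)) > 1−α ), where Φ is the standard normal cumulative distribution function and (U₁,U₀) is bivariate normal with mean μ(r_E) = ( a·r^{1/2}/((r+1)·w₀(1−w₀))^{1/2}, (−[r(r+r_E+1)+2r_E]·a + 2(r+1)·r_E·b)/((r+r_E+1)·(r(r+1)·w₀(1−w₀))^{1/2}) ) and covariance Σ(r_E) = [[1,−1],[−1, 1 + 4r_E/(r(r+r_E+1))]]. Then lim_{r_E → ∞}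 g(r, r_E, a, b, w₀) = P( Φ(max(V₁,V₀)) − Φ(min(V₁,V₀)) > 1−α ), where (V₁,V₀) is bivariate normal with mean μ_∞ = ( a·r^{1/2}/((r+1)·w₀(1−w₀))^{1/2}, (−a(r+2) + 2(r+1)b)/((r(r+1)·w₀(1−w₀))^{1/2}) ) and covariance Σ_∞ = [[1,−1],[−1, 1+4/r]]. -/
/-!
STATEMENT 12 (Corollary 1 of the paper): as `r_E → ∞`, the limiting power
function `g(r, r_E, a, b, w₀)` of Proposition 3 converges to the analogous
probability for the bivariate normal vector with mean
`μ_∞ = (a√r/√((r+1)w₀(1−w₀)), (−a(r+2)+2(r+1)b)/√(r(r+1)w₀(1−w₀)))` and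
covariance `Σ_∞ = [[1,−1],[−1,1+4/r]]`. A bivariate normal law with mean
`(μ₁,μ₂)` and covariance `[[1,−1],[−1,1+s²]]` is realized as the image of a
standard two-dimensional Gaussian `(z₁,z₂)` under
`(U₁,U₀) = (z₁ + μ₁, −z₁ + s·z₂ + μ₂)`; here `s² = 4r_E/(r(r+r_E+1))`
(respectively `s² = 4/r` in the limit), matching `Σ(r_E)` (resp. `Σ_∞`),
both positive definite.
-/

open MeasureTheory ProbabilityTheory Filter

noncomputable section

/-- The standard normal cumulative distribution function `Φ`. -/
def stdNormalCDF (x : ℝ) : ℝ := ((gaussianReal 0 1) (Set.Iic x)).toReal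

/-- `P(Φ(max(U₁,U₀)) − Φ(min(U₁,U₀)) > 1−α)` for the bivariate normal vector
`(U₁,U₀) = (z₁ + μ₁, −z₁ + s·z₂ + μ₂)`, `(z₁,z₂)` a standard two-dimensional
Gaussian; `(U₁,U₀)` has mean `(μ₁,μ₂)` and covariance `[[1,−1],[−1,1+s²]]`. -/
def limitPower (α μ₁ μ₂ s : ℝ) : ℝ :=
  (((gaussianReal 0 1).prod (gaussianReal 0 1))
    {z : ℝ × ℝ | 1 - α <
      stdNormalCDF (max (z.1 + μ₁) (-z.1 + s * z.2 + μ₂)) -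
        stdNormalCDF (min (z.1 + μ₁) (-z.1 + s * z.2 + μ₂))}).toReal

/-- The limiting power function `g(r, r_E, a, b, w₀)` of Proposition 3 at
level `α`: the bivariate normal vector has mean
`( a√r/√((r+1)w₀(1−w₀)),
   (−[r(r+r_E+1)+2r_E]a + 2(r+1)r_E·b)/((r+r_E+1)√(r(r+1)w₀(1−w₀))) )`
and covariance `[[1,−1],[−1,1+4r_E/(r(r+r_E+1))]]`. -/

lemma stdNormalCDF_eq (x : ℝ) :
    stdNormalCDF x = ∫ t in Set.Iic x, gaussianPDFReal 0 1 t := by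
  rw [stdNormalCDF, gaussianReal_apply_eq_integral 0 one_ne_zero,
    ENNReal.toReal_ofReal (integral_nonneg fun t => gaussianPDFReal_nonneg 0 1 t)]

lemma continuous_stdNormalCDF : Continuous stdNormalCDF := by
  have hint := integrable_gaussianPDFReal 0 1
  have h : ∀ x, stdNormalCDF 0 + ∫ t in (0:ℝ)..x, gaussianPDFReal 0 1 t = stdNormalCDF x := by
    intro x
    rw [stdNormalCDF_eq, stdNormalCDF_eq,
      ← intervalIntegral.integral_Iic_sub_Iic hint.integrableOn hint.integrableOn]
    ring
  exact (continuous_const.add (hint.continuous_primitive 0)).congr h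

lemma strictMono_stdNormalCDF : StrictMono stdNormalCDF := by
  intro x y hxy
  have hint := integrable_gaussianPDFReal 0 1
  have h : stdNormalCDF y - stdNormalCDF x = ∫ t in x..y, gaussianPDFReal 0 1 t := by
    rw [stdNormalCDF_eq, stdNormalCDF_eq,
      intervalIntegral.integral_Iic_sub_Iic hint.integrableOn hint.integrableOn]
  have hpos : 0 < ∫ t in x..y, gaussianPDFReal 0 1 t :=
    intervalIntegral.intervalIntegral_pos_of_pos_on hint.intervalIntegrable
      (fun t _ => gaussianPDFReal_pos 0 1 t one_ne_zero) hxy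
  linarith

def gPower (r rE a b w₀ α : ℝ) : ℝ :=
  limitPower α
    (a * Real.sqrt r / Real.sqrt ((r + 1) * w₀ * (1 - w₀)))
    ((-(r * (r + rE + 1) + 2 * rE) * a + 2 * (r + 1) * rE * b) /
      ((r + rE + 1) * Real.sqrt (r * (r + 1) * w₀ * (1 - w₀))))
    (Real.sqrt (4 * rE / (r * (r + rE + 1))))

/-- auxiliary function -/
def auxF (μ₁ p q : ℝ) (z : ℝ × ℝ) : ℝ :=
  stdNormalCDF (max (z.1 + μ₁) (-z.1 + q * z.2 + p)) -
    stdNormalCDF (min (z.1 + μ₁) (-z.1 + q * z.2 + p))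

lemma continuous_auxF (μ₁ : ℝ) :
    Continuous (fun x : (ℝ × ℝ) × ℝ × ℝ => auxF μ₁ x.1.1 x.1.2 x.2) := by
  unfold auxF
  exact (continuous_stdNormalCDF.comp (by fun_prop)).sub
    (continuous_stdNormalCDF.comp (by fun_prop))

set_option maxHeartbeats 1000000 in
lemma limitPower_eq (α μ₁ p q : ℝ) : limitPower α μ₁ p q =
    (((gaussianReal 0 1).prod (gaussianReal 0 1))
      {z : ℝ × ℝ | 1 - α < auxF μ₁ p q z}).toReal := rfl

attribute [irreducible] stdNormalCDF auxF

lemma tendsto_limitPower {α μ₁ : ℝ} {m s : ℝ → ℝ} {M S : ℝ}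
    (hm : Tendsto m atTop (nhds M)) (hs : Tendsto s atTop (nhds S)) :
    Tendsto (fun t => limitPower α μ₁ (m t) (s t)) atTop
      (nhds (limitPower α μ₁ M S)) := by
  set ν := (gaussianReal 0 1).prod (gaussianReal 0 1) with hν
  have hFz : ∀ p q : ℝ, Continuous (auxF μ₁ p q) :=
    fun p q => (continuous_auxF μ₁).comp
      (by fun_prop : Continuous fun z : ℝ × ℝ => (((p, q) : ℝ × ℝ), z))
  have hSmeas : ∀ p q : ℝ, MeasurableSet {z : ℝ × ℝ | 1 - α < auxF μ₁ p q z} :=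
    fun p q => measurableSet_lt measurable_const (hFz p q).measurable
  -- null boundary
  have hNmeas : MeasurableSet {z : ℝ × ℝ | auxF μ₁ M S z = 1 - α} :=
    (hFz M S).measurable (measurableSet_singleton _)
  have hslice : ∀ y : ℝ, (volume : Measure ℝ)
      {x : ℝ | auxF μ₁ M S (x, y) = 1 - α} = 0 := by
    intro y
    set ψ : ℝ → ℝ := fun x => stdNormalCDF (x + μ₁) - stdNormalCDF (-x + S * y + M) with hψdef
    have hψ : StrictMono ψ := by
      have h1 : StrictMono fun x : ℝ => stdNormalCDF (x + μ₁) :=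
        strictMono_stdNormalCDF.comp fun u v huv => by simpa using huv
      have h2 : StrictMono fun x : ℝ => -stdNormalCDF (-x + S * y + M) := by
        intro u v huv
        simp only [neg_lt_neg_iff]
        exact strictMono_stdNormalCDF (by linarith)
      exact fun u v huv => add_lt_add (h1 huv) (h2 huv)
    have habs : ∀ x : ℝ, auxF μ₁ M S (x, y) = |ψ x| := by
      intro x
      rcases le_total (x + μ₁) (-x + S * y + M) with h | h
      · rw [auxF, max_eq_right h, min_eq_left h]
        rw [abs_of_nonpos (by simpa [ψ] using sub_nonpos.2 (strictMono_stdNormalCDF.monotone h))]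
        simp [ψ]
      · rw [auxF, max_eq_left h, min_eq_right h]
        rw [abs_of_nonneg (by simpa [ψ] using sub_nonneg.2 (strictMono_stdNormalCDF.monotone h))]
    have hsub : {x : ℝ | auxF μ₁ M S (x, y) = 1 - α} ⊆
        {x : ℝ | ψ x = 1 - α} ∪ {x : ℝ | ψ x = -(1 - α)} := by
      intro x hx
      simp only [Set.mem_setOf_eq, habs x] at hx
      rcases abs_cases (ψ x) with ⟨h1, _⟩ | ⟨h1, _⟩
      · exact Or.inl (h1.symm.trans hx)
      · exact Or.inr (by simp only [Set.mem_setOf_eq]; linarith)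
    refine measure_mono_null hsub (measure_union_null ?_ ?_) <;>
      exact Set.Subsingleton.measure_zero
        (fun u hu v hv => hψ.injective (hu.trans hv.symm)) _
  have hνN : ν {z : ℝ × ℝ | auxF μ₁ M S z = 1 - α} = 0 := by
    have hρN : ((volume : Measure ℝ).prod volume)
        {z : ℝ × ℝ | auxF μ₁ M S z = 1 - α} = 0 := by
      rw [Measure.prod_apply_symm hNmeas]
      simp only [Set.preimage_setOf_eq]
      simp [hslice]
    have habs : ν ≪ (volume : Measure ℝ).prod volume :=
      Measure.AbsolutelyContinuous.prod (gaussianReal_absolutelyContinuous 0 one_ne_zero)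
        (gaussianReal_absolutelyContinuous 0 one_ne_zero)
    exact habs hρN
  have hae : ∀ᵐ z ∂ν, auxF μ₁ M S z ≠ 1 - α := by
    rw [ae_iff]
    simpa [not_not] using hνN
  -- rewrite limitPower as integrals of indicators
  set I : ℝ → ℝ → (ℝ × ℝ) → ℝ :=
    fun p q => Set.indicator {z : ℝ × ℝ | 1 - α < auxF μ₁ p q z} (1 : (ℝ × ℝ) → ℝ) with hI
  have hint : ∀ p q : ℝ, limitPower α μ₁ p q = ∫ z, I p q z ∂ν := by
    intro p q
    rw [limitPower_eq, hI, integral_indicator_one (hSmeas p q)]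
    rfl
  have hbound : ∀ t : ℝ, ∀ᵐ z ∂ν, ‖I (m t) (s t) z‖ ≤ 1 := by
    intro t
    refine Eventually.of_forall fun z => ?_
    rw [hI]
    classical
    simp only [Set.indicator_apply]
    split_ifs <;> norm_num
  have hmeas : ∀ t : ℝ, AEStronglyMeasurable (I (m t) (s t)) ν := by
    intro t
    rw [hI]
    exact (measurable_const.indicator (hSmeas (m t) (s t))).aestronglyMeasurable
  have hlim : ∀ᵐ z ∂ν, Tendsto (fun t => I (m t) (s t) z) atTop (nhds (I M S z)) := by
    filter_upwards [hae] with z hz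
    have hzt : Tendsto (fun t => auxF μ₁ (m t) (s t) z) atTop (nhds (auxF μ₁ M S z)) := by
      have hc : Continuous (fun pq : ℝ × ℝ => auxF μ₁ pq.1 pq.2 z) :=
        (continuous_auxF μ₁).comp (by fun_prop : Continuous fun pq : ℝ × ℝ => (pq, z))
      exact (hc.tendsto (M, S)).comp (hm.prodMk_nhds hs)
    rcases lt_or_gt_of_ne hz with h | h
    · have hev : ∀ᶠ t in atTop, I (m t) (s t) z = 0 := by
        filter_upwards [hzt.eventually_lt_const h] with t ht
        rw [hI]
        show ({z : ℝ × ℝ | 1 - α < auxF μ₁ (m t) (s t) z}).indicator (1 : ℝ × ℝ → ℝ) z = 0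
        exact Set.indicator_of_notMem (by simp only [Set.mem_setOf_eq]; push_neg; linarith) _
      have h0 : I M S z = 0 := by
        rw [hI]
        show ({z : ℝ × ℝ | 1 - α < auxF μ₁ M S z}).indicator (1 : ℝ × ℝ → ℝ) z = 0
        exact Set.indicator_of_notMem (by simp only [Set.mem_setOf_eq]; push_neg; linarith) _
      rw [h0]
      exact Tendsto.congr' (hev.mono fun t ht => ht.symm) tendsto_const_nhds
    · have hev : ∀ᶠ t in atTop, I (m t) (s t) z = 1 := by
        filter_upwards [hzt.eventually_const_lt h] with t ht
        rw [hI]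
        show ({z : ℝ × ℝ | 1 - α < auxF μ₁ (m t) (s t) z}).indicator (1 : ℝ × ℝ → ℝ) z = 1
        exact Set.indicator_of_mem (show z ∈ {z : ℝ × ℝ | 1 - α < auxF μ₁ (m t) (s t) z} from ht) _
      have h1 : I M S z = 1 := by
        rw [hI]
        show ({z : ℝ × ℝ | 1 - α < auxF μ₁ M S z}).indicator (1 : ℝ × ℝ → ℝ) z = 1
        exact Set.indicator_of_mem (show z ∈ {z : ℝ × ℝ | 1 - α < auxF μ₁ M S z} from h) _
      rw [h1]
      exact Tendsto.congr' (hev.mono fun t ht => ht.symm) tendsto_const_nhds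
  have main : Tendsto (fun t => ∫ z, I (m t) (s t) z ∂ν) atTop (nhds (∫ z, I M S z ∂ν)) :=
    tendsto_integral_filter_of_dominated_convergence (fun _ => (1:ℝ))
      (Eventually.of_forall hmeas) (Eventually.of_forall hbound)
      (integrable_const 1) hlim
  rw [funext fun t => hint (m t) (s t), hint M S]
  exact main

theorem stmt_12 (w₀ a b r α : ℝ)
    (hw₀ : w₀ ∈ Set.Ioo (0 : ℝ) 1) (ha : 0 < a) (hr : 0 < r)
    (hα : α ∈ Set.Ioo (0 : ℝ) 1) :
    Tendsto (fun rE : ℝ => gPower r rE a b w₀ α) atTop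
      (nhds (limitPower α
        (a * Real.sqrt r / Real.sqrt ((r + 1) * w₀ * (1 - w₀)))
        ((-a * (r + 2) + 2 * (r + 1) * b) / Real.sqrt (r * (r + 1) * w₀ * (1 - w₀)))
        (Real.sqrt (4 / r)))) := by
  obtain ⟨hw1, hw2⟩ := hw₀
  set c : ℝ := Real.sqrt (r * (r + 1) * w₀ * (1 - w₀)) with hcdef
  have hcpos : 0 < c :=
    Real.sqrt_pos.2 (mul_pos (mul_pos (mul_pos hr (by linarith)) hw1) (by linarith))
  have hm : Tendsto (fun t : ℝ => (-(r * (r + t + 1) + 2 * t) * a + 2 * (r + 1) * t * b) /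
      ((r + t + 1) * c)) atTop (nhds ((-a * (r + 2) + 2 * (r + 1) * b) / c)) := by
    have h1 : Tendsto (fun t : ℝ => (r * (r + 1)) / t) atTop (nhds 0) :=
      tendsto_const_nhds.div_atTop tendsto_id
    have h2 : Tendsto (fun t : ℝ => (r + 1) / t) atTop (nhds 0) :=
      tendsto_const_nhds.div_atTop tendsto_id
    have hq : Tendsto (fun t : ℝ => (-((r * (r + 1)) / t + (r + 2)) * a + 2 * (r + 1) * b) /
        (((r + 1) / t + 1) * c)) atTop
        (nhds ((-(0 + (r + 2)) * a + 2 * (r + 1) * b) / ((0 + 1) * c))) := by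
      refine Tendsto.div ?_ ?_ (by simp [hcpos.ne'])
      · exact ((h1.add tendsto_const_nhds).neg.mul tendsto_const_nhds).add tendsto_const_nhds
      · exact (h2.add tendsto_const_nhds).mul tendsto_const_nhds
    rw [show (-(0 + (r + 2)) * a + 2 * (r + 1) * b) / ((0 + 1) * c)
        = (-a * (r + 2) + 2 * (r + 1) * b) / c by ring_nf] at hq
    refine Tendsto.congr' ?_ hq
    filter_upwards [eventually_gt_atTop 0] with t ht
    have h3 : (0:ℝ) < r + t + 1 := by linarith
    have h4 : (0:ℝ) < (r + 1) / t + 1 := by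
      have : 0 < (r + 1) / t := div_pos (by linarith) ht
      linarith
    field_simp
    ring
  have hs : Tendsto (fun t : ℝ => Real.sqrt (4 * t / (r * (r + t + 1)))) atTop
      (nhds (Real.sqrt (4 / r))) := by
    have h2 : Tendsto (fun t : ℝ => (r + 1) / t) atTop (nhds 0) :=
      tendsto_const_nhds.div_atTop tendsto_id
    have hin : Tendsto (fun t : ℝ => 4 / (r * ((r + 1) / t + 1))) atTop
        (nhds (4 / (r * (0 + 1)))) :=
      tendsto_const_nhds.div (tendsto_const_nhds.mul (h2.add tendsto_const_nhds))
        (mul_ne_zero hr.ne' (by norm_num))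
    rw [show (4 : ℝ) / (r * (0 + 1)) = 4 / r by ring] at hin
    have hin' : Tendsto (fun t : ℝ => 4 * t / (r * (r + t + 1))) atTop (nhds (4 / r)) := by
      refine Tendsto.congr' ?_ hin
      filter_upwards [eventually_gt_atTop 0] with t ht
      have h3 : (0:ℝ) < r + t + 1 := by linarith
      have h4 : (0:ℝ) < (r + 1) / t + 1 := by
        have : 0 < (r + 1) / t := div_pos (by linarith) ht
        linarith
      field_simp
      ring
    exact (Real.continuous_sqrt.tendsto _).comp hin'
  simp only [gPower, ← hcdef]
  exact tendsto_limitPower hm hs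

end
end
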